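/- For every temporal election E = (C, N, ℓ, A): every outcome providing strong full justified representation (sFJR) also provides strong full proportional justified representation (sFPJR), and every outcome providing sFPJR also provides both strong proportional justified representation (sPJR) and full proportional justified representation (FPJR). -/

import Mathlib

open Finset

/-- Satisfaction of the voter group `S` over the rounds in `R` under the
(sub)outcome `o`: the number of rounds `r ∈ R` in which the selected
candidate `o r` is approved by at least one voter in `S`. -/
def satR {C : Type*} [DecidableEq C] {n ℓ : ℕ} (A : Fin n → Fin ℓ → Finset C)
    (S : Finset (Fin n)) (R : Finset (Fin ℓ)) (o : Fin ℓ → C) : ℕ :=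
  (R.filter fun r => o r ∈ S.biUnion fun i => A i r).card

/-- Strong full justified representation: some voter `i ∈ S` has satisfaction
at least `max_{R, |R| = ⌊ℓ|S|/n⌋} max_{o'_R} min_{j ∈ S} sat_j(o'_R)`. -/
def providesSFJR {C : Type*} [DecidableEq C] {n ℓ : ℕ}
    (A : Fin n → Fin ℓ → Finset C) (o : Fin ℓ → C) : Prop :=
  ∀ S : Finset (Fin n), S.Nonempty → ∃ i ∈ S,
    ∀ R : Finset (Fin ℓ), R.card = ℓ * S.card / n →
      ∀ o' : Fin ℓ → C, ∃ j ∈ S, satR A {j} R o' ≤ satR A {i} univ o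

/-- Strong full proportional justified representation: the group satisfaction
of `S` is at least `ρˢ(S) = max_{R, |R| = ⌊ℓ|S|/n⌋} max_{o'_R} min_{i ∈ S} sat_i(o'_R)`. -/
def providesSFPJR {C : Type*} [DecidableEq C] {n ℓ : ℕ}
    (A : Fin n → Fin ℓ → Finset C) (o : Fin ℓ → C) : Prop :=
  ∀ S : Finset (Fin n), S.Nonempty →
    ∀ R : Finset (Fin ℓ), R.card = ℓ * S.card / n →
      ∀ o' : Fin ℓ → C, ∃ j ∈ S, satR A {j} R o' ≤ satR A S univ o

/-- Strong proportional justified representation. -/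
def providesSPJR {C : Type*} [DecidableEq C] {n ℓ : ℕ}
    (A : Fin n → Fin ℓ → Finset C) (o : Fin ℓ → C) : Prop :=
  ∀ t : ℕ, 0 < t → ∀ S : Finset (Fin n),
    (∃ R : Finset (Fin ℓ), R.card = t ∧ ∀ r ∈ R, ∃ c : C, ∀ i ∈ S, c ∈ A i r) →
    min t (ℓ * S.card / n) ≤ satR A S univ o

/-- Full proportional justified representation: the group satisfaction of `S`
is at least `max_{T ⊆ [ℓ]} μ_S(T)`. -/
def providesFPJR {C : Type*} [DecidableEq C] {n ℓ : ℕ}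
    (A : Fin n → Fin ℓ → Finset C) (o : Fin ℓ → C) : Prop :=
  ∀ S : Finset (Fin n), S.Nonempty →
    ∀ T : Finset (Fin ℓ), ∃ R ⊆ T, R.card = T.card * S.card / n ∧
      ∀ o' : Fin ℓ → C, ∃ j ∈ S, satR A {j} R o' ≤ satR A S univ o



lemma satR_mono_S {C : Type*} [DecidableEq C] {n ℓ : ℕ} (A : Fin n → Fin ℓ → Finset C)
    {S S' : Finset (Fin n)} (hS : S ⊆ S') (R : Finset (Fin ℓ)) (o : Fin ℓ → C) :
    satR A S R o ≤ satR A S' R o := by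
  apply Finset.card_le_card
  intro r hr
  simp only [Finset.mem_filter, Finset.mem_biUnion] at *
  obtain ⟨hrR, i, hi, hc⟩ := hr
  exact ⟨hrR, i, hS hi, hc⟩

lemma satR_mono_R {C : Type*} [DecidableEq C] {n ℓ : ℕ} (A : Fin n → Fin ℓ → Finset C)
    (S : Finset (Fin n)) {R R' : Finset (Fin ℓ)} (hR : R ⊆ R') (o : Fin ℓ → C) :
    satR A S R o ≤ satR A S R' o :=
  Finset.card_le_card (Finset.filter_subset_filter _ hR)

/-- Every outcome providing sFJR provides sFPJR, and every outcome providing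
sFPJR provides both sPJR and FPJR. -/
theorem sFJR_implies_sFPJR_implies_sPJR_and_FPJR {C : Type*} [Fintype C] [Nonempty C] [DecidableEq C] {n ℓ : ℕ}
    (hℓ : 1 ≤ ℓ) (A : Fin n → Fin ℓ → Finset C) (o : Fin ℓ → C) :
    (providesSFJR A o → providesSFPJR A o) ∧
    (providesSFPJR A o → providesSPJR A o ∧ providesFPJR A o) := by
  constructor
  · intro h S hS R hR o'
    obtain ⟨i, hi, hip⟩ := h S hS
    obtain ⟨j, hj, hle⟩ := hip R hR o'
    exact ⟨j, hj, hle.trans (satR_mono_S A (Finset.singleton_subset_iff.2 hi) _ o)⟩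
  · intro h
    constructor
    · intro t ht S hex
      obtain ⟨R, hRc, hagree⟩ := hex
      rcases S.eq_empty_or_nonempty with hE | hS
      · simp [hE]
      · have hn : 0 < n := hS.choose.pos
        set m := min t (ℓ * S.card / n) with hm
        have hScard : S.card ≤ n := by
          simpa using S.card_le_univ
        have hdle : ℓ * S.card / n ≤ ℓ := by
          calc ℓ * S.card / n ≤ ℓ * n / n :=
                Nat.div_le_div_right (Nat.mul_le_mul_left _ hScard)
            _ = ℓ := Nat.mul_div_cancel _ hn
        -- define the suboutcome using agreement candidates
        classical
        set o' : Fin ℓ → C := fun r =>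
          if hr : r ∈ R then (hagree r hr).choose else Classical.arbitrary C with ho'
        have hmt : m ≤ t := min_le_left _ _
        obtain ⟨R₁, hR₁R, hR₁c⟩ := R.exists_subset_card_eq (by omega : m ≤ R.card)
        have hR₁card : R₁.card ≤ ℓ * S.card / n := by
          rw [hR₁c]; exact min_le_right _ _
        obtain ⟨R', hRR', _, hR'c⟩ :=
          Finset.exists_subsuperset_card_eq (Finset.subset_univ R₁) hR₁card
            (by simpa using hdle)
        obtain ⟨j, hj, hle⟩ := h S hS R' hR'c o'
        have hsat : m ≤ satR A {j} R₁ o' := by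
          have heq : (R₁.filter fun r => o' r ∈ ({j} : Finset (Fin n)).biUnion
              fun i => A i r) = R₁ := by
            apply Finset.filter_true_of_mem
            intro r hr
            have hrR : r ∈ R := hR₁R hr
            simp only [ho', dif_pos hrR, Finset.mem_biUnion, Finset.mem_singleton]
            exact ⟨j, rfl, (hagree r hrR).choose_spec j hj⟩
          have : satR A {j} R₁ o' = R₁.card := by unfold satR; rw [heq]
          omega
        exact hsat.trans ((satR_mono_R A _ hRR' o').trans hle)
    · intro S hS T
      have hn : 0 < n := hS.choose.pos
      have hScard : S.card ≤ n := by simpa using S.card_le_univ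
      have hTle : T.card ≤ ℓ := by simpa using T.card_le_univ
      have h1 : T.card * S.card / n ≤ T.card := by
        calc T.card * S.card / n ≤ T.card * n / n :=
              Nat.div_le_div_right (Nat.mul_le_mul_left _ hScard)
          _ = T.card := Nat.mul_div_cancel _ hn
      obtain ⟨R, hRT, hRc⟩ := T.exists_subset_card_eq h1
      refine ⟨R, hRT, hRc, fun o' => ?_⟩
      have h2 : R.card ≤ ℓ * S.card / n := by
        rw [hRc]
        exact Nat.div_le_div_right (Nat.mul_le_mul_right _ hTle)
      have hdle : ℓ * S.card / n ≤ ℓ := by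
        calc ℓ * S.card / n ≤ ℓ * n / n :=
              Nat.div_le_div_right (Nat.mul_le_mul_left _ hScard)
          _ = ℓ := Nat.mul_div_cancel _ hn
      obtain ⟨R', hRR', _, hR'c⟩ :=
        Finset.exists_subsuperset_card_eq (Finset.subset_univ R) h2
          (by simpa using hdle)
      obtain ⟨j, hj, hle⟩ := h S hS R' hR'c o'
      exact ⟨j, hj, (satR_mono_R A _ hRR' o').trans hle⟩
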